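/- (Tightness of certified poisoning size, Individual Attack) Let T* = max{T ≤ K' : U^{ŷ}(T) < min_{c≠ŷ} L^c(T)} and suppose T*+1 ≤ K'. Then there exist poisoned per-class distance multisets, each differing from the clean ones in at most T*+1 elements, such that the robust distance of ŷ is greater than or equal to the robust distance of some class c ≠ ŷ (so ŷ is not guaranteed to be the unique argmin). -/

import Mathlib

open Finset

noncomputable def tm (K Kp : ℕ) (e : ℕ → ℝ) : ℝ :=
  (∑ i ∈ Finset.Icc (Kp + 1) (K - Kp), e i) / ((K : ℝ) - 2 * Kp)

noncomputable def sortedOf (E : Multiset ℝ) : ℕ → ℝ :=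
  fun i => (E.sort (· ≤ ·)).getD (i - 1) 0

def msOf (K : ℕ) (d : ℕ → ℝ) : Multiset ℝ := (Finset.Icc 1 K).val.map d

noncomputable def Ub (K Kp : ℕ) (d : ℕ → ℝ) (t : ℕ) : ℝ :=
  (∑ i ∈ Finset.Icc (Kp + 1 + t) (K - Kp + t), d i) / ((K : ℝ) - 2 * Kp)

noncomputable def Lb (K Kp : ℕ) (d : ℕ → ℝ) (t : ℕ) : ℝ :=
  (∑ i ∈ Finset.Icc (Kp + 1 - t) (K - Kp - t), d i) / ((K : ℝ) - 2 * Kp)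

lemma msOf_eq_coe (K : ℕ) (f : ℕ → ℝ) :
    msOf K f = ((List.range' 1 K).map f : List ℝ) := by
  show Multiset.map f (Finset.Icc 1 K).val = _
  have h1 : (Finset.Icc 1 K).val = ↑(List.range' 1 (K + 1 - 1)) := rfl
  rw [h1]; simp

lemma sort_msOf (K : ℕ) (f : ℕ → ℝ) (hf : ∀ i j, 1 ≤ i → i ≤ j → j ≤ K → f i ≤ f j) :
    (msOf K f).sort (· ≤ ·) = (List.range' 1 K).map f := by
  have hperm : ((msOf K f).sort (· ≤ ·)).Perm ((List.range' 1 K).map f) := by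
    rw [← Multiset.coe_eq_coe]
    rw [Multiset.sort_eq, msOf_eq_coe]
  refine List.Perm.eq_of_pairwise' (Multiset.pairwise_sort _ _) ?_ hperm
  rw [List.pairwise_map]
  have : (List.range' 1 K).Pairwise (· < ·) := List.pairwise_lt_range' (s := 1) (n := K)
  refine this.imp_of_mem ?_
  intro a b ha hb hab
  rw [List.mem_range'] at ha hb
  exact hf a b (by omega) (by omega) (by omega)

lemma sortedOf_msOf (K : ℕ) (f : ℕ → ℝ) (hf : ∀ i j, 1 ≤ i → i ≤ j → j ≤ K → f i ≤ f j)
    (i : ℕ) (h1 : 1 ≤ i) (h2 : i ≤ K) : sortedOf (msOf K f) i = f i := by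
  rw [sortedOf, sort_msOf K f hf]
  have hlen : i - 1 < ((List.range' 1 K).map f).length := by simp; omega
  rw [List.getD_eq_getElem _ _ hlen]
  simp [List.getElem_range']
  congr 1; omega

lemma card_msOf (K : ℕ) (f : ℕ → ℝ) : Multiset.card (msOf K f) = K := by
  rw [msOf_eq_coe]; simp

lemma card_diff_le (A B R S : Multiset ℝ) (hA : A = R + S) (hR : R ≤ B) :
    Multiset.card (A - B) ≤ Multiset.card S := by
  have h1 : A - B ≤ A - R := tsub_le_tsub_left hR A
  have h2 : A - R = S := by rw [hA, add_tsub_cancel_left]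
  calc Multiset.card (A - B) ≤ Multiset.card (A - R) := Multiset.card_le_card h1
    _ = Multiset.card S := by rw [h2]

lemma range'_split (a b K : ℕ) (h : a + b = K) :
    List.range' 1 K = List.range' 1 a ++ List.range' (1 + a) b := by
  rw [List.range'_append_1]
  congr 1; omega

lemma sum_shift (a b t : ℕ) (f : ℕ → ℝ) :
    ∑ i ∈ Finset.Icc (a + t) (b + t), f i = ∑ i ∈ Finset.Icc a b, f (i + t) := by
  rw [← Finset.map_add_right_Icc a b t, Finset.sum_map]
  rfl

theorem stmt17 (C K Kp : ℕ) (hK : 2 * Kp < K)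
    (d : Fin C → ℕ → ℝ)
    (hmono : ∀ c, ∀ i j, 1 ≤ i → i ≤ j → j ≤ K → d c i ≤ d c j)
    (yhat : Fin C) (Tstar : ℕ)
    (hmax : IsGreatest
      {T | T ≤ Kp ∧ ∀ c, c ≠ yhat → Ub K Kp (d yhat) T < Lb K Kp (d c) T} Tstar)
    (hT1 : Tstar + 1 ≤ Kp) :
    ∃ E : Fin C → Multiset ℝ,
      (∀ c, Multiset.card (E c) = K) ∧
      (∀ c, Multiset.card (msOf K (d c) - E c) ≤ Tstar + 1) ∧
      ∃ c, c ≠ yhat ∧ tm K Kp (sortedOf (E c)) ≤ tm K Kp (sortedOf (E yhat)) := by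
  set t := Tstar + 1 with ht
  -- obtain the failing class c
  have hnot : ¬ (t ≤ Kp ∧ ∀ c, c ≠ yhat → Ub K Kp (d yhat) t < Lb K Kp (d c) t) := by
    intro h
    have := hmax.2 h
    omega
  push_neg at hnot
  obtain ⟨c, hcy, hLU⟩ := hnot hT1
  have htK : t ≤ Kp := hT1
  have htK' : t < K := by omega
  -- the poisoned (sorted) sequences
  set ey : ℕ → ℝ := fun i => if i ≤ K - t then d yhat (i + t) else d yhat K with hey
  set ec : ℕ → ℝ := fun i => if t < i then d c (i - t) else d c 1 with hec
  have heymono : ∀ i j, 1 ≤ i → i ≤ j → j ≤ K → ey i ≤ ey j := by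
    intro i j h1 h2 h3
    simp only [hey]
    by_cases hj : j ≤ K - t
    · rw [if_pos (le_trans h2 hj), if_pos hj]
      exact hmono yhat _ _ (by omega) (by omega) (by omega)
    · rw [if_neg hj]
      by_cases hi : i ≤ K - t
      · rw [if_pos hi]
        exact hmono yhat _ _ (by omega) (by omega) (by omega)
      · rw [if_neg hi]
  have hecmono : ∀ i j, 1 ≤ i → i ≤ j → j ≤ K → ec i ≤ ec j := by
    intro i j h1 h2 h3
    simp only [hec]
    by_cases hi : t < i
    · rw [if_pos hi, if_pos (lt_of_lt_of_le hi h2)]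
      exact hmono c _ _ (by omega) (by omega) (by omega)
    · rw [if_neg hi]
      by_cases hj : t < j
      · rw [if_pos hj]
        exact hmono c _ _ (by omega) (by omega) (by omega)
      · rw [if_neg hj]
  classical
  refine ⟨fun c' => if c' = yhat then msOf K ey else if c' = c then msOf K ec
      else msOf K (d c'), ?_, ?_, ?_⟩
  · intro c'
    by_cases h1 : c' = yhat <;> by_cases h2 : c' = c <;>
      simp [h1, h2, hcy, card_msOf]
  · intro c'
    by_cases h1 : c' = yhat
    · subst h1
      beta_reduce
      rw [if_pos rfl]
      -- msOf K (d c') = R + S with R = map d (range' (t+1) (K-t)) shared with msOf K ey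
      refine le_trans (card_diff_le _ _
        (((List.range' (t + 1) (K - t)).map (d c') : List ℝ) : Multiset ℝ)
        (((List.range' 1 t).map (d c') : List ℝ) : Multiset ℝ) ?_ ?_) (by simp)
      · rw [msOf_eq_coe]
        have hsplit : List.range' 1 K = List.range' 1 t ++ List.range' (1 + t) (K - t) :=
          range'_split t (K - t) K (by omega)
        rw [hsplit, List.map_append]
        have : (1 : ℕ) + t = t + 1 := by omega
        rw [this]
        rw [← Multiset.coe_add]
        exact add_comm _ _
      · -- map d (range' (t+1) (K-t)) ≤ msOf K ey
        rw [msOf_eq_coe]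
        have hsplit : List.range' 1 K = List.range' 1 (K - t) ++ List.range' (1 + (K - t)) t :=
          range'_split (K - t) t K (by omega)
        rw [hsplit, List.map_append]
        have hagree : (List.range' 1 (K - t)).map ey = (List.range' (t + 1) (K - t)).map (d c') := by
          apply List.ext_getElem (by simp)
          intro n h1 h2
          simp only [List.getElem_map, List.getElem_range']
          simp only [List.length_map, List.length_range'] at h1
          rw [hey]
          simp only
          rw [if_pos (by omega)]
          congr 1; omega
        rw [show (((List.range' 1 (K - t)).map ey ++ (List.range' (1 + (K - t)) t).map ey :
            List ℝ) : Multiset ℝ) = (((List.range' 1 (K - t)).map ey : List ℝ) : Multiset ℝ) +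
            (((List.range' (1 + (K - t)) t).map ey : List ℝ) : Multiset ℝ) from rfl]
        rw [hagree]
        exact Multiset.le_add_right _ _
    · by_cases h2 : c' = c
      · subst h2
        beta_reduce
        rw [if_neg h1, if_pos rfl]
        refine le_trans (card_diff_le _ _
          (((List.range' 1 (K - t)).map (d c') : List ℝ) : Multiset ℝ)
          (((List.range' (1 + (K - t)) t).map (d c') : List ℝ) : Multiset ℝ) ?_ ?_) (by simp)
        · rw [msOf_eq_coe]
          have hsplit : List.range' 1 K = List.range' 1 (K - t) ++ List.range' (1 + (K - t)) t :=
            range'_split (K - t) t K (by omega)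
          rw [hsplit, List.map_append]
          rfl
        · rw [msOf_eq_coe]
          have hsplit : List.range' 1 K = List.range' 1 t ++ List.range' (1 + t) (K - t) :=
            range'_split t (K - t) K (by omega)
          rw [hsplit, List.map_append]
          have hagree : (List.range' (1 + t) (K - t)).map ec =
              (List.range' 1 (K - t)).map (d c') := by
            apply List.ext_getElem (by simp)
            intro n hn1 hn2
            simp only [List.getElem_map, List.getElem_range']
            rw [hec]
            simp only
            rw [if_pos (by omega)]
            congr 1; omega
          rw [show (((List.range' 1 t).map ec ++ (List.range' (1 + t) (K - t)).map ec :
              List ℝ) : Multiset ℝ) = (((List.range' 1 t).map ec : List ℝ) : Multiset ℝ) +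
              (((List.range' (1 + t) (K - t)).map ec : List ℝ) : Multiset ℝ) from rfl]
          rw [hagree]
          exact Multiset.le_add_left _ _
      · simp [h1, h2]
  · refine ⟨c, hcy, ?_⟩
    have e1 : (if c = yhat then msOf K ey else if c = c then msOf K ec else msOf K (d c)) =
        msOf K ec := by rw [if_neg hcy, if_pos rfl]
    have e2 : (if yhat = yhat then msOf K ey else if yhat = c then msOf K ec
        else msOf K (d yhat)) = msOf K ey := if_pos rfl
    beta_reduce
    rw [e1, e2]
    have htm_y : tm K Kp (sortedOf (msOf K ey)) = Ub K Kp (d yhat) t := by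
      rw [tm, Ub]
      congr 1
      rw [sum_shift]
      apply Finset.sum_congr rfl
      intro i hi
      simp only [Finset.mem_Icc] at hi
      rw [sortedOf_msOf K ey heymono i (by omega) (by omega), hey]
      simp only
      rw [if_pos (by omega)]
    have htm_c : tm K Kp (sortedOf (msOf K ec)) = Lb K Kp (d c) t := by
      rw [tm, Lb]
      congr 1
      have hrw : Finset.Icc (Kp + 1) (K - Kp) = Finset.Icc (Kp + 1 - t + t) (K - Kp - t + t) := by
        congr 1 <;> omega
      rw [hrw, sum_shift]
      apply Finset.sum_congr rfl
      intro i hi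
      simp only [Finset.mem_Icc] at hi
      rw [sortedOf_msOf K ec hecmono (i + t) (by omega) (by omega), hec]
      simp only
      rw [if_pos (by omega)]
      congr 1; omega
    rw [htm_y, htm_c]
    exact hLU
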